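/- Let P and Q be nonzero integers with D = P^2 - 4Q ≠ 0, let U = U(P,Q) be nondegenerate, and let p be a prime with p ∣ D and p ∤ gcd(P,Q). Then for every integer k ≥ 1 one has M^U_{p^k} ≡ p (mod p^k); that is, there exists an integer t such that M^U_{p^k} = p + p^k·t. -/

import Mathlib

/-- Lucas sequence of the first kind: `U 0 = 0`, `U 1 = 1`,
`U (n+2) = P * U (n+1) - Q * U n`. -/
def lucasU (P Q : ℤ) : ℕ → ℤ
  | 0 => 0
  | 1 => 1
  | n + 2 => P * lucasU P Q (n + 1) - Q * lucasU P Q n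

/-- Möbius dual of the Lucas sequence of the first kind:
`M^U_n = ∏_{d ∣ n} U_d ^ μ(n/d)`, as a rational number. -/
def mobiusDualU (P Q : ℤ) (n : ℕ) : ℚ :=
  ∏ d ∈ n.divisors, (lucasU P Q d : ℚ) ^ (ArithmeticFunction.moebius (n / d))

namespace LucasAux


lemma lucasU_zero (P Q : ℤ) : lucasU P Q 0 = 0 := rfl
lemma lucasU_one (P Q : ℤ) : lucasU P Q 1 = 1 := rfl
lemma lucasU_add_two (P Q : ℤ) (n : ℕ) :
    lucasU P Q (n + 2) = P * lucasU P Q (n + 1) - Q * lucasU P Q n := rfl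
lemma lucasU_two (P Q : ℤ) : lucasU P Q 2 = P := by
  rw [show (2:ℕ) = 0 + 2 from rfl, lucasU_add_two, lucasU_one, lucasU_zero]; ring

lemma two_step {C : ℕ → Prop} (h0 : C 0) (h1 : C 1)
    (h : ∀ n, C n → C (n + 1) → C (n + 2)) : ∀ n, C n := by
  have key : ∀ n, C n ∧ C (n + 1) := by
    intro n
    induction n with
    | zero => exact ⟨h0, h1⟩
    | succ k ih => exact ⟨ih.2, h k ih.1 ih.2⟩
  exact fun n => (key n).1

def lucasV (P Q : ℤ) (n : ℕ) : ℤ := 2 * lucasU P Q (n + 1) - P * lucasU P Q n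

lemma lucasV_zero (P Q : ℤ) : lucasV P Q 0 = 2 := by
  unfold lucasV; rw [lucasU_one, lucasU_zero]; ring

lemma lucasV_one (P Q : ℤ) : lucasV P Q 1 = P := by
  unfold lucasV; rw [lucasU_one, lucasU_two]; ring

lemma lucasV_succ (P Q : ℤ) (n : ℕ) :
    lucasV P Q (n + 1) = lucasU P Q (n + 2) - Q * lucasU P Q n := by
  unfold lucasV; rw [lucasU_add_two]; ring

lemma lucasU_add (P Q : ℤ) : ∀ n a, lucasU P Q (n + 1 + a) =
    lucasU P Q (n + 1) * lucasU P Q (a + 1) - Q * lucasU P Q n * lucasU P Q a := by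
  intro n
  induction n with
  | zero => intro a; rw [lucasU_one, lucasU_zero, show 0 + 1 + a = a + 1 by omega]; ring
  | succ m ih =>
    intro a
    rw [show m + 1 + 1 + a = m + 1 + (a + 1) by omega, ih (a + 1),
      show a + 1 + 1 = a + 2 from rfl, show m + 1 + 1 = m + 2 from rfl,
      lucasU_add_two P Q a, lucasU_add_two P Q m]
    ring

lemma lucasU_six (P Q : ℤ) (a : ℕ) : ∀ n, lucasU P Q (n + 1) * lucasU P Q (a + n)
    - lucasU P Q n * lucasU P Q (a + n + 1) = Q ^ n * lucasU P Q a := by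
  intro n
  induction n with
  | zero => simp [lucasU_one, lucasU_zero]
  | succ m ih =>
    rw [show m + 1 + 1 = m + 2 from rfl, show a + (m+1) + 1 = a + m + 2 by omega,
      show a + (m + 1) = a + m + 1 by omega,
      lucasU_add_two P Q m, lucasU_add_two P Q (a + m)]
    linear_combination Q * ih

lemma lucasU_T (P Q : ℤ) (n a : ℕ) : lucasU P Q (a + 2 * n) + Q ^ n * lucasU P Q a
    = lucasV P Q n * lucasU P Q (a + n) := by
  cases n with
  | zero => rw [lucasV_zero]; simp; ring
  | succ s =>
    have h1 := lucasU_add P Q (s + 1) (a + s)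
    rw [show s + 1 + 1 + (a + s) = a + 2 * (s + 1) by omega] at h1
    have h2 := lucasU_six P Q a s
    rw [lucasV_succ, show a + (s + 1) = a + s + 1 by omega,
      show s + 1 + 1 = s + 2 from rfl] at *
    linear_combination h1 - Q * h2

lemma lucasU_pell (P Q : ℤ) : ∀ n, lucasU P Q (n + 1) ^ 2
    - P * lucasU P Q (n + 1) * lucasU P Q n + Q * lucasU P Q n ^ 2 = Q ^ n := by
  intro n
  induction n with
  | zero => rw [lucasU_one, lucasU_zero]; ring
  | succ m ih =>
    rw [show m + 1 + 1 = m + 2 from rfl, lucasU_add_two]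
    linear_combination Q * ih

lemma lucasV_discr (P Q : ℤ) (n : ℕ) :
    lucasV P Q n ^ 2 - 4 * Q ^ n = (P ^ 2 - 4 * Q) * lucasU P Q n ^ 2 := by
  unfold lucasV
  linear_combination 4 * lucasU_pell P Q n

lemma lucasU_mult (P Q : ℤ) (n : ℕ) : ∀ m,
    lucasU P Q (n * m) = lucasU P Q n * lucasU (lucasV P Q n) (Q ^ n) m := by
  apply two_step
  · rw [show n * 0 = 0 from rfl, lucasU_zero, lucasU_zero]; ring
  · rw [show n * 1 = n by omega, lucasU_one]; ring
  · intro m ih1 ih2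
    have hT := lucasU_T P Q n (n * m)
    rw [show n * m + n = n * (m + 1) by ring] at hT
    rw [show n * (m + 2) = n * m + 2 * n by ring, lucasU_add_two (lucasV P Q n)]
    linear_combination hT + lucasV P Q n * ih2 - Q ^ n * ih1

lemma lucasU_L1 (P Q : ℤ) : ∀ m : ℕ,
    (P ^ 2 - 4 * Q) ∣ 2 ^ m * lucasU P Q (m + 1) - ((m : ℤ) + 1) * P ^ m := by
  apply two_step
  · rw [lucasU_one]; norm_num
  · rw [lucasU_two]; norm_num
  · intro m ih1 ih2
    obtain ⟨x, hx⟩ := ih1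
    obtain ⟨y, hy⟩ := ih2
    refine ⟨2 * P * y - P ^ 2 * x + 2 ^ m * lucasU P Q (m + 1), ?_⟩
    rw [show m + 2 + 1 = m + 1 + 2 by omega, lucasU_add_two P Q (m + 1)]
    push_cast at hx hy ⊢
    linear_combination (2 * P) * hy - P ^ 2 * hx

lemma lucasV_double (P Q : ℤ) (m : ℕ) :
    lucasV P Q (2 * m) = lucasV P Q m ^ 2 - 2 * Q ^ m := by
  have hT1 := lucasU_T P Q m 1
  have hT0 := lucasU_T P Q m 0
  rw [lucasU_one, show (1:ℕ) + 2 * m = 2 * m + 1 by omega, show (1:ℕ) + m = m + 1 by omega] at hT1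
  rw [lucasU_zero, show (0:ℕ) + 2 * m = 2 * m by omega, show (0:ℕ) + m = m by omega] at hT0
  unfold lucasV
  unfold lucasV at hT1 hT0
  linear_combination (2 : ℤ) * hT1 - P * hT0


lemma not_dvd_two_pow {p : ℕ} (hp : p.Prime) (hodd : p ≠ 2) (m : ℕ) :
    ¬ (p : ℤ) ∣ 2 ^ m := by
  intro h
  have h2 : (p : ℤ) ∣ 2 := (Nat.prime_iff_prime_int.mp hp).dvd_of_dvd_pow h
  have : p ∣ 2 := by exact_mod_cast h2
  exact hodd ((Nat.prime_dvd_prime_iff_eq hp Nat.prime_two).mp this)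

lemma lucasU_pow_dvd (P Q : ℤ) (p : ℕ) (hp : p.Prime) (hpD : (p : ℤ) ∣ P ^ 2 - 4 * Q) :
    ∀ j, (p : ℤ) ^ j ∣ lucasU P Q (p ^ j) := by
  intro j
  induction j with
  | zero => simp [lucasU_one]
  | succ j ih =>
    rw [pow_succ, pow_succ, lucasU_mult P Q (p ^ j) p]
    refine mul_dvd_mul ih ?_
    have hd : (p : ℤ) ∣ lucasV P Q (p ^ j) ^ 2 - 4 * Q ^ p ^ j := by
      rw [lucasV_discr]
      exact hpD.mul_right _
    by_cases h2 : p = 2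
    · subst h2
      have hP2 : (2 : ℤ) ∣ P := by
        have h4 : (2 : ℤ) ∣ P ^ 2 := by
          have h5 : (2 : ℤ) ∣ 4 * Q := ⟨2 * Q, by ring⟩
          have h6 := dvd_add (by exact_mod_cast hpD : (2:ℤ) ∣ P ^ 2 - 4 * Q) h5
          simpa using h6
        exact (Nat.prime_iff_prime_int.mp hp).dvd_of_dvd_pow h4
      rw [lucasU_two]
      have hc : ((2:ℕ) : ℤ) = 2 := by norm_num
      rw [hc]
      unfold lucasV
      exact dvd_sub (dvd_mul_right 2 _) (hP2.mul_right _)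
    · have hL := lucasU_L1 (lucasV P Q (p ^ j)) (Q ^ p ^ j) (p - 1)
      rw [show p - 1 + 1 = p by have := hp.two_le; omega] at hL
      have hcast : (((p - 1 : ℕ) : ℤ) + 1) = (p : ℤ) := by
        have := hp.two_le; push_cast [Nat.cast_sub (by omega : 1 ≤ p)]; ring
      rw [hcast] at hL
      have h1 : (p : ℤ) ∣ 2 ^ (p - 1) * lucasU (lucasV P Q (p ^ j)) (Q ^ p ^ j) p := by
        have h2 := hd.trans hL
        have h3 : (p : ℤ) ∣ (p : ℤ) * lucasV P Q (p ^ j) ^ (p - 1) := Dvd.intro _ rfl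
        simpa using dvd_add h2 h3
      rcases (Int.Prime.dvd_mul' hp h1) with h | h
      · exact absurd h (not_dvd_two_pow hp h2 _)
      · exact h


lemma fermat_aux (P Q : ℤ) (p h : ℕ) (hp : p.Prime) (hodd : p ≠ 2)
    (hph : p - 1 = 2 * h)
    (hpD : (p : ℤ) ∣ P ^ 2 - 4 * Q) (hpP : ¬ (p : ℤ) ∣ P) (hpQ : ¬ (p : ℤ) ∣ Q) :
    (p : ℤ) ∣ Q ^ h - 1 := by
  have c1 : IsCoprime P (p : ℤ) := by
    rw [Int.isCoprime_iff_gcd_eq_one]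
    rcases Nat.coprime_or_dvd_of_prime hp (Int.natAbs P) with hco | hdvd
    · rw [Int.gcd]
      simpa [Nat.coprime_comm] using hco
    · exact absurd (Int.natCast_dvd.mpr hdvd) hpP
  have c2 : IsCoprime (2 : ℤ) (p : ℤ) := by
    rw [Int.isCoprime_iff_gcd_eq_one]
    have : ¬ (p : ℤ) ∣ 2 := not_dvd_two_pow hp hodd 1 ∘ (by simpa using ·)
    rcases Nat.coprime_or_dvd_of_prime hp 2 with hco | hdvd
    · rw [Int.gcd]
      simpa [Nat.coprime_comm] using hco
    · exact absurd (by exact_mod_cast hdvd) this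
  have f1 : P ^ (p - 1) ≡ 1 [ZMOD p] := Int.ModEq.pow_card_sub_one_eq_one hp c1
  have f2 : (2:ℤ) ^ (p - 1) ≡ 1 [ZMOD p] := Int.ModEq.pow_card_sub_one_eq_one hp c2
  have f3 : (4 * Q) ≡ P ^ 2 [ZMOD p] := Int.modEq_iff_dvd.mpr hpD
  have f4 : (4 * Q) ^ h ≡ P ^ (p - 1) [ZMOD p] := by
    have := f3.pow h
    rwa [← pow_mul, ← hph] at this
  have e48 : ((4 : ℤ) * Q) ^ h = 2 ^ (p - 1) * Q ^ h := by
    rw [mul_pow, show (4:ℤ) = 2 ^ 2 by norm_num, ← pow_mul, ← hph]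
  rw [e48] at f4
  have f5 : 2 ^ (p-1) * Q ^ h ≡ 1 [ZMOD p] := f4.trans f1
  have f6 : 2 ^ (p-1) * Q ^ h ≡ 1 * Q ^ h [ZMOD p] := f2.mul_right _
  have f7 : Q ^ h ≡ 1 [ZMOD p] := by
    have := f6.symm.trans f5
    rwa [one_mul] at this
  exact f7.symm.dvd

lemma keyOdd (P Q : ℤ) (p c : ℕ) (hp : p.Prime) (hodd : p ≠ 2)
    (hpD : (p : ℤ) ∣ P ^ 2 - 4 * Q) (hpP : ¬ (p : ℤ) ∣ P) (hpQ : ¬ (p : ℤ) ∣ Q) :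
    (p : ℤ) ^ (c + 1) ∣ lucasU (lucasV P Q (p ^ c)) (Q ^ p ^ c) p - p := by
  obtain ⟨r, hr⟩ := hp.odd_of_ne_two hodd
  have hp2 := hp.two_le
  set n := p ^ c with hn
  set P' := lucasV P Q n with hP'
  set Q' := Q ^ n with hQ'
  set W := lucasU P' Q' p with hW
  set h : ℕ := r with hh
  have hph : p - 1 = 2 * h := by omega
  have f2 : (p : ℤ) ^ c ∣ lucasU P Q n := lucasU_pow_dvd P Q p hp hpD c
  have f1 : P' ^ 2 - 4 * Q' = (P ^ 2 - 4 * Q) * lucasU P Q n ^ 2 := lucasV_discr P Q n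
  have f3 : (p : ℤ) ^ (2 * c + 1) ∣ P' ^ 2 - 4 * Q' := by
    rw [f1, show 2 * c + 1 = 1 + (c + c) by omega, pow_add, pow_add, pow_one, sq (lucasU P Q n)]
    exact mul_dvd_mul hpD (mul_dvd_mul f2 f2)
  have f3' : (p : ℤ) ^ (c + 1) ∣ P' ^ 2 - 4 * Q' :=
    (pow_dvd_pow _ (by omega : c + 1 ≤ 2 * c + 1)).trans f3
  have f3c : (p : ℤ) ^ c ∣ P' ^ 2 - 4 * Q' :=
    (pow_dvd_pow _ (by omega : c ≤ 2 * c + 1)).trans f3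
  have f4 := lucasU_L1 P' Q' (p - 1)
  rw [show p - 1 + 1 = p by omega] at f4
  have hcast : (((p - 1 : ℕ) : ℤ) + 1) = (p : ℤ) := by
    push_cast [Nat.cast_sub (by omega : 1 ≤ p)]; ring
  rw [hcast] at f4
  have f4' : (p : ℤ) ^ (c + 1) ∣ 2 ^ (p - 1) * W - (p : ℤ) * P' ^ (p - 1) := f3'.trans f4
  have f7 : (p : ℤ) ^ c ∣ P' ^ (p - 1) - (4 * Q') ^ h := by
    have e : P' ^ (p - 1) - (4 * Q') ^ h = (P' ^ 2) ^ h - (4 * Q') ^ h := by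
      rw [← pow_mul, ← hph]
    rw [e]
    exact f3c.trans (sub_dvd_pow_sub_pow _ _ h)
  have e48 : ((4 : ℤ) * Q') ^ h = 2 ^ (p - 1) * (Q ^ h) ^ n := by
    rw [mul_pow, show (4:ℤ) = 2 ^ 2 by norm_num, ← pow_mul, ← hph, hQ', ← pow_mul,
      mul_comm n h, pow_mul]
  rw [e48] at f7
  have f9 : (p : ℤ) ∣ Q ^ h - 1 := fermat_aux P Q p h hp hodd hph hpD hpP hpQ
  have f10 : (p : ℤ) ^ (c + 1) ∣ (Q ^ h) ^ p ^ c - 1 := by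
    have := dvd_sub_pow_of_dvd_sub f9 c
    simpa using this
  have hsum : 2 ^ (p - 1) * (W - (p : ℤ)) =
      (2 ^ (p - 1) * W - (p : ℤ) * P' ^ (p - 1))
      + (p : ℤ) * (P' ^ (p - 1) - 2 ^ (p - 1) * (Q ^ h) ^ n)
      + ((p : ℤ) * 2 ^ (p - 1)) * ((Q ^ h) ^ n - 1) := by ring
  have hdvd : (p : ℤ) ^ (c + 1) ∣ 2 ^ (p - 1) * (W - (p : ℤ)) := by
    rw [hsum]
    refine dvd_add (dvd_add f4' ?_) ?_
    · rw [pow_succ']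
      exact mul_dvd_mul_left _ f7
    · exact Dvd.dvd.mul_left (by rw [hn]; exact f10) _
  have hpprime : Prime (p : ℤ) := Nat.prime_iff_prime_int.mp hp
  exact hpprime.pow_dvd_of_dvd_mul_left (c + 1) (not_dvd_two_pow hp hodd _) hdvd

lemma keyTwo (P Q : ℤ) (c : ℕ) (hpD : (2 : ℤ) ∣ P ^ 2 - 4 * Q)
    (hP2 : (2 : ℤ) ∣ P) (hQ2 : ¬ (2 : ℤ) ∣ Q) :
    (2 : ℤ) ^ (c + 1) ∣ lucasV P Q (2 ^ c) - 2 := by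
  have hQ1 : (2 : ℤ) ∣ Q - 1 := by
    rcases Int.even_or_odd Q with he | ho
    · exact absurd he.two_dvd hQ2
    · obtain ⟨m, hm⟩ := ho
      exact ⟨m, by omega⟩
  cases c with
  | zero =>
    rw [pow_one, pow_zero, lucasV_one]
    exact dvd_sub hP2 (dvd_refl 2)
  | succ j =>
    rw [show (2:ℕ) ^ (j + 1) = 2 * 2 ^ j by ring, lucasV_double]
    have e : lucasV P Q (2 ^ j) ^ 2 - 2 * Q ^ 2 ^ j - 2 =
        (lucasV P Q (2 ^ j) ^ 2 - 4 * Q ^ 2 ^ j) + 2 * (Q ^ 2 ^ j - 1) := by ring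
    rw [e]
    refine dvd_add ?_ ?_
    · rw [lucasV_discr]
      have hD4 : (2 : ℤ) ^ 2 ∣ P ^ 2 - 4 * Q := by
        obtain ⟨a, ha⟩ := hP2
        exact ⟨a ^ 2 - Q, by rw [ha]; ring⟩
      have hU : (2 : ℤ) ^ j ∣ lucasU P Q (2 ^ j) := by
        have := lucasU_pow_dvd P Q 2 Nat.prime_two hpD j
        simpa using this
      have : (2:ℤ) ^ (2 + (j + j)) ∣ (P ^ 2 - 4 * Q) * lucasU P Q (2 ^ j) ^ 2 := by
        rw [pow_add, pow_add, sq (lucasU P Q (2 ^ j))]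
        exact mul_dvd_mul hD4 (mul_dvd_mul hU hU)
      exact (pow_dvd_pow _ (by omega : j + 1 + 1 ≤ 2 + (j + j))).trans this
    · have h10 : (2 : ℤ) ^ (j + 1) ∣ Q ^ 2 ^ j - 1 := by
        have := dvd_sub_pow_of_dvd_sub hQ1 j
        simpa using this
      rw [show j + 1 + 1 = 1 + (j + 1) by omega, pow_add, pow_one]
      exact mul_dvd_mul_left _ h10


lemma mobius_eq (P Q : ℤ) (p c : ℕ) (hp : p.Prime) :
    mobiusDualU P Q (p ^ (c + 1)) =
      (lucasU P Q (p ^ (c + 1)) : ℚ) * (lucasU P Q (p ^ c) : ℚ)⁻¹ := by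
  rw [mobiusDualU, Nat.prod_divisors_prime_pow hp, Finset.prod_range_succ,
    Finset.prod_range_succ]
  have h1 : ∀ i ∈ Finset.range c,
      ((lucasU P Q (p ^ i) : ℚ)) ^ (ArithmeticFunction.moebius (p ^ (c + 1) / p ^ i)) = 1 := by
    intro i hi
    rw [Finset.mem_range] at hi
    rw [Nat.pow_div (by omega) hp.pos,
      ArithmeticFunction.moebius_apply_prime_pow hp (by omega), if_neg (by omega), zpow_zero]
  rw [Finset.prod_congr rfl h1, Finset.prod_const_one, one_mul,
    Nat.pow_div (by omega) hp.pos, Nat.pow_div (by omega) hp.pos,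
    show c + 1 - c = 1 by omega, Nat.sub_self, pow_one, pow_zero,
    ArithmeticFunction.moebius_apply_prime hp, ArithmeticFunction.moebius_apply_one,
    zpow_neg_one, zpow_one]
  ring


end LucasAux

open LucasAux in
theorem stmt_0 (P Q : ℤ) (hP : P ≠ 0) (hQ : Q ≠ 0) (hD : P ^ 2 - 4 * Q ≠ 0)
    (hnd : ∀ m : ℕ, 1 ≤ m → lucasU P Q m ≠ 0)
    (p : ℕ) (hp : p.Prime) (hpD : (p : ℤ) ∣ (P ^ 2 - 4 * Q))
    (hpPQ : ¬ p ∣ Int.gcd P Q) (k : ℕ) (hk : 1 ≤ k) :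
    ∃ t : ℤ, mobiusDualU P Q (p ^ k) = (p : ℚ) + (p : ℚ) ^ k * (t : ℚ) := by
  obtain ⟨c, rfl⟩ : ∃ c, k = c + 1 := ⟨k - 1, by omega⟩
  have hgcd : ¬ ((p : ℤ) ∣ P ∧ (p : ℤ) ∣ Q) := by
    rintro ⟨h1, h2⟩
    exact hpPQ (Int.natCast_dvd_natCast.mp (Int.dvd_coe_gcd h1 h2))
  have hkey : ∃ t : ℤ,
      lucasU (lucasV P Q (p ^ c)) (Q ^ p ^ c) p = (p : ℤ) + (p : ℤ) ^ (c + 1) * t := by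
    by_cases h2 : p = 2
    · subst h2
      have hP2 : (2 : ℤ) ∣ P := by
        have h4 : (2 : ℤ) ∣ P ^ 2 := by
          have h5 : (2 : ℤ) ∣ 4 * Q := ⟨2 * Q, by ring⟩
          have h6 := dvd_add (by exact_mod_cast hpD : (2:ℤ) ∣ P ^ 2 - 4 * Q) h5
          simpa using h6
        exact (Nat.prime_iff_prime_int.mp hp).dvd_of_dvd_pow h4
      have hQ2 : ¬ (2 : ℤ) ∣ Q := fun h => hgcd ⟨by exact_mod_cast hP2, by exact_mod_cast h⟩
      obtain ⟨t, ht⟩ := keyTwo P Q c (by exact_mod_cast hpD) hP2 hQ2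
      refine ⟨t, ?_⟩
      rw [lucasU_two]
      push_cast
      omega
    · have hpP : ¬ (p : ℤ) ∣ P := by
        intro h
        have hq : (p : ℤ) ∣ Q := by
          have h4 : (p : ℤ) ∣ 4 * Q := by
            have h5 : (p : ℤ) ∣ P ^ 2 := Dvd.dvd.pow h (by norm_num)
            simpa using dvd_sub h5 hpD
          rcases Int.Prime.dvd_mul' hp h4 with hc | hc
          · exact absurd hc (by exact not_dvd_two_pow hp h2 2)
          · exact hc
        exact hgcd ⟨h, hq⟩
      have hpQ : ¬ (p : ℤ) ∣ Q := by
        intro h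
        have h4 : (p : ℤ) ∣ P ^ 2 := by
          have h5 : (p : ℤ) ∣ 4 * Q := h.mul_left 4
          simpa using dvd_add hpD h5
        exact hpP ((Nat.prime_iff_prime_int.mp hp).dvd_of_dvd_pow h4)
      obtain ⟨t, ht⟩ := keyOdd P Q p c hp h2 hpD hpP hpQ
      exact ⟨t, by omega⟩
  obtain ⟨t, ht⟩ := hkey
  refine ⟨t, ?_⟩
  rw [mobius_eq P Q p c hp, show p ^ (c + 1) = p ^ c * p from pow_succ p c,
    lucasU_mult P Q (p ^ c) p, ht]
  have hU : (lucasU P Q (p ^ c) : ℚ) ≠ 0 := by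
    exact_mod_cast hnd _ (Nat.one_le_iff_ne_zero.mpr (pow_ne_zero c hp.pos.ne'))
  push_cast
  field_simp
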